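/- arXiv:1910.09812 — 2 statements merged into one kernel-verified Lean document; each statement's English description precedes it below -/
import Mathlib

section
/- Let M ≥ 0 and let α = (in₁, cost₁, out₁) and β = (in₂, cost₂, out₂) be valid SoC-profile parameter triples with induced SoC profiles f_α and f_β, where we extend f_β by f_β(−∞) := −∞. (a) If out₁ ≥ in₂, then the SoC profile f of the linked triple (max(in₁, cost₁+in₂), max(cost₁+cost₂, in₁−out₂), min(out₂, out₁−cost₂)) satisfies f(b) = f_β(f_α(b)) for every b ∈ [0, M]. (b) If out₁ < in₂, then f_β(f_α(b)) = −∞ for every b ∈ [0, M]. -/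
/-- An SoC-profile parameter triple `(inp, cost, out)` is valid for battery capacity `M`
if `0 ≤ inp ≤ M`, `0 ≤ out ≤ M`, and `cost ≤ inp`. -/
def ValidTriple (M inp cost out : ℝ) : Prop :=
  0 ≤ inp ∧ inp ≤ M ∧ 0 ≤ out ∧ out ≤ M ∧ cost ≤ inp

/-- The SoC profile induced by the parameter triple `(inp, cost, out)`, extended to `EReal`
so that `⊥` (representing `−∞`) is mapped to `⊥`. -/
noncomputable def socProfile (inp cost out : ℝ) (b : EReal) : EReal :=
  if b < (inp : EReal) then ⊥
  else if (out : EReal) < b - (cost : EReal) then (out : EReal)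
  else b - (cost : EReal)

lemma socProfile_bot (inp cost out : ℝ) : socProfile inp cost out ⊥ = ⊥ := by
  unfold socProfile
  rw [if_pos (EReal.bot_lt_coe _)]

lemma socProfile_coe (inp cost out x : ℝ) :
    socProfile inp cost out (x : EReal) =
      if x < inp then ⊥ else ((min out (x - cost) : ℝ) : EReal) := by
  unfold socProfile
  rw [← EReal.coe_sub]
  simp only [EReal.coe_lt_coe_iff]
  split_ifs with h1 h2
  · rfl
  · rw [min_eq_left h2.le]
  · rw [min_eq_right (not_lt.mp h2)]

theorem socProfile_link (M in₁ cost₁ out₁ in₂ cost₂ out₂ : ℝ) (hM : 0 ≤ M)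
    (hα : ValidTriple M in₁ cost₁ out₁) (hβ : ValidTriple M in₂ cost₂ out₂) :
    -- (a) if `out₁ ≥ in₂`, the profile of the linked triple is the composition
    (out₁ ≥ in₂ →
      ∀ b : ℝ, 0 ≤ b → b ≤ M →
        socProfile (max in₁ (cost₁ + in₂)) (max (cost₁ + cost₂) (in₁ - out₂))
            (min out₂ (out₁ - cost₂)) (b : EReal)
          = socProfile in₂ cost₂ out₂ (socProfile in₁ cost₁ out₁ (b : EReal))) ∧
    -- (b) if `out₁ < in₂`, the composition is identically `−∞`
    (out₁ < in₂ →
      ∀ b : ℝ, 0 ≤ b → b ≤ M →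
        socProfile in₂ cost₂ out₂ (socProfile in₁ cost₁ out₁ (b : EReal)) = ⊥) := by
  obtain ⟨h1a, h1b, h1c, h1d, h1e⟩ := hα
  obtain ⟨h2a, h2b, h2c, h2d, h2e⟩ := hβ
  constructor
  · intro hge b hb0 hbM
    rw [socProfile_coe in₁ cost₁ out₁ b]
    by_cases hb1 : b < in₁
    · rw [if_pos hb1, socProfile_bot, socProfile_coe,
        if_pos (lt_max_iff.mpr (Or.inl hb1))]
    · rw [if_neg hb1, socProfile_coe, socProfile_coe]
      push_neg at hb1
      by_cases hb2 : b < cost₁ + in₂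
      · rw [if_pos (lt_max_iff.mpr (Or.inr hb2)),
          if_pos (min_lt_iff.mpr (Or.inr (by linarith)))]
      · push_neg at hb2
        rw [if_neg (by rw [not_lt, max_le_iff]; constructor <;> linarith),
          if_neg (by rw [not_lt, le_min_iff]; constructor <;> linarith)]
        rw [EReal.coe_eq_coe_iff]
        simp only [min_def, max_def]
        split_ifs <;> linarith
  · intro hlt b hb0 hbM
    rw [socProfile_coe]
    by_cases hb1 : b < in₁
    · rw [if_pos hb1, socProfile_bot]
    · push_neg at hb1
      rw [if_neg (not_lt.mpr hb1), socProfile_coe,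
        if_pos (by rw [min_def]; split_ifs <;> linarith)]
end

section
/- Let M ≥ 0 and let α = (in₁, cost₁, out₁) and β = (in₂, cost₂, out₂) be valid SoC-profile parameter triples with out₁ ≥ in₂, and suppose the linked in-value satisfies max(in₁, cost₁+in₂) ≤ M. Then the linked triple (max(in₁, cost₁+in₂), max(cost₁+cost₂, in₁−out₂), min(out₂, out₁−cost₂)) is again valid; in particular max(cost₁+cost₂, in₁−out₂) ≤ max(in₁, cost₁+in₂) and 0 ≤ min(out₂, out₁−cost₂) ≤ M. -/
theorem linked_triple_valid (M in₁ cost₁ out₁ in₂ cost₂ out₂ : ℝ) (hM : 0 ≤ M)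
    (hα : ValidTriple M in₁ cost₁ out₁) (hβ : ValidTriple M in₂ cost₂ out₂)
    (hout : out₁ ≥ in₂) (hlin : max in₁ (cost₁ + in₂) ≤ M) :
    ValidTriple M (max in₁ (cost₁ + in₂)) (max (cost₁ + cost₂) (in₁ - out₂))
      (min out₂ (out₁ - cost₂)) ∧
    -- in particular:
    max (cost₁ + cost₂) (in₁ - out₂) ≤ max in₁ (cost₁ + in₂) ∧
    0 ≤ min out₂ (out₁ - cost₂) ∧ min out₂ (out₁ - cost₂) ≤ M := by
  obtain ⟨a1, a2, a3, a4, a5⟩ := hα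
  obtain ⟨b1, b2, b3, b4, b5⟩ := hβ
  have hcost : max (cost₁ + cost₂) (in₁ - out₂) ≤ max in₁ (cost₁ + in₂) :=
    max_le (le_max_of_le_right (by linarith)) (le_max_of_le_left (by linarith))
  have h0 : (0:ℝ) ≤ min out₂ (out₁ - cost₂) := le_min b3 (by linarith)
  exact ⟨⟨le_max_of_le_left a1, hlin, h0, (min_le_left _ _).trans b4, hcost⟩,
    hcost, h0, (min_le_left _ _).trans b4⟩
end
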